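/- Let μ be a σ-finite measure on a measurable space X, let p_c, p_u, and p_ref be strictly positive probability densities with respect to μ, let β > 0, and let σ(w) = 1/(1+e^{−w}) denote the sigmoid function. Suppose ∫ p_ref(x)(p_c(x)/p_u(x))^{1/β} dμ(x) is finite and set λ = (∫ p_ref(x)(p_c(x)/p_u(x))^{1/β} dμ(x))^{β} and p*(x) = p_ref(x)·(p_c(x)/p_u(x))^{1/β}·λ^{−1/β}. Then p* is a probability density with respect to μ, and for every strictly positive probability density q with respect to μ, ∫ log σ(β log(q(x)/p_ref(x))) p_c(x) dμ(x) + λ ∫ log σ(−β log(q(x)/p_ref(x))) p_u(x) dμ(x) ≤ ∫ log σ(β log(p*(x)/p_ref(x))) p_c(x) dμ(x) + λ ∫ log σ(−β log(p*(x)/p_ref(x))) p_u(x) dμ(x). -/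

import Mathlib

open MeasureTheory Real ENNReal

/-- The sigmoid function `σ(w) = 1/(1 + e^{-w})`. -/
noncomputable def sigmoid (w : ℝ) : ℝ := 1 / (1 + Real.exp (-w))

lemma sigmoid_pos (w : ℝ) : 0 < _root_.sigmoid w := by
  unfold _root_.sigmoid; positivity

lemma sigmoid_lt_one (w : ℝ) : _root_.sigmoid w < 1 := by
  unfold _root_.sigmoid
  rw [div_lt_one (by positivity)]
  linarith [Real.exp_pos (-w)]

lemma sigmoid_neg (w : ℝ) : _root_.sigmoid (-w) = 1 - _root_.sigmoid w := by
  unfold _root_.sigmoid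
  have h1 : (1 : ℝ) + Real.exp (-w) ≠ 0 := by positivity
  have h2 : (1 : ℝ) + Real.exp w ≠ 0 := by positivity
  have h3 : Real.exp w * Real.exp (-w) = 1 := by
    rw [← Real.exp_add]; simp
  rw [neg_neg]
  field_simp
  nlinarith [h3]

lemma sigmoid_mul_log (β t : ℝ) (ht : 0 < t) :
    _root_.sigmoid (β * Real.log t) = 1 / (1 + t ^ (-β)) := by
  unfold _root_.sigmoid
  rw [Real.rpow_def_of_pos ht]
  have : -(β * Real.log t) = Real.log t * (-β) := by ring
  rw [this]

lemma gibbs {c u P Q : ℝ} (hc : 0 < c) (hu : 0 < u)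
    (hP : P = c / (c + u)) (hQ0 : 0 < Q) (hQ1 : Q < 1) :
    c * (-Real.log P) + u * (-Real.log (1 - P)) ≤
      c * (-Real.log Q) + u * (-Real.log (1 - Q)) := by
  have hcu : 0 < c + u := by linarith
  have hP0 : 0 < P := by rw [hP]; positivity
  have hP1 : P < 1 := by rw [hP, div_lt_one hcu]; linarith
  have hQ1' : 0 < 1 - Q := by linarith
  have hP1' : 0 < 1 - P := by linarith
  have h1 : Real.log (Q / P) ≤ Q / P - 1 :=
    Real.log_le_sub_one_of_pos (by positivity)
  have h2 : Real.log ((1 - Q) / (1 - P)) ≤ (1 - Q) / (1 - P) - 1 :=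
    Real.log_le_sub_one_of_pos (by positivity)
  rw [Real.log_div (ne_of_gt hQ0) (ne_of_gt hP0)] at h1
  rw [Real.log_div (ne_of_gt hQ1') (ne_of_gt hP1')] at h2
  have e1 : c / P = c + u := by rw [hP]; field_simp
  have e2 : 1 - P = u / (c + u) := by rw [hP]; field_simp; ring
  have e3 : u / (1 - P) = c + u := by rw [e2]; field_simp
  have k1 : c * (Real.log Q - Real.log P) ≤ (c + u) * Q - c := by
    have h := mul_le_mul_of_nonneg_left h1 hc.le
    have hcp : c * (Q / P) = (c + u) * Q := by
      rw [div_eq_mul_inv, ← mul_assoc, mul_comm c Q, mul_assoc, ← div_eq_mul_inv, e1]; ring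
    nlinarith [h]
  have k2 : u * (Real.log (1 - Q) - Real.log (1 - P)) ≤ (c + u) * (1 - Q) - u := by
    have h := mul_le_mul_of_nonneg_left h2 hu.le
    have hcp : u * ((1 - Q) / (1 - P)) = (c + u) * (1 - Q) := by
      rw [div_eq_mul_inv, ← mul_assoc, mul_comm u (1-Q), mul_assoc, ← div_eq_mul_inv, e3]; ring
    nlinarith [h]
  nlinarith [k1, k2]

/-- **CCA with the normalizing choice of λ (equivalence of CCA and CC-DPO).**
With `λ = (∫ p_ref (p_c/p_u)^{1/β} dμ)^β` the gamma-powered distribution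
`p* = p_ref (p_c/p_u)^{1/β} λ^{-1/β}` is a probability density, and it maximizes the
λ-weighted NCE objective `∫ log σ(β log(q/p_ref)) p_c dμ + λ ∫ log σ(−β log(q/p_ref)) p_u dμ`
over strictly positive probability densities `q`.  Since the integrands are
nonpositive, the objective is stated via Lebesgue integrals of their negations,
reversed. -/
theorem cca_optimal_density {X : Type*} [MeasurableSpace X]
    (μ : Measure X) [SigmaFinite μ]
    (pc pu pref : X → ℝ)
    (hpcm : Measurable pc) (hpum : Measurable pu) (hprefm : Measurable pref)
    (hpcpos : ∀ x, 0 < pc x) (hpupos : ∀ x, 0 < pu x) (hprefpos : ∀ x, 0 < pref x)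
    (hpci : Integrable pc μ) (hpui : Integrable pu μ) (hprefi : Integrable pref μ)
    (hpc1 : ∫ x, pc x ∂μ = 1) (hpu1 : ∫ x, pu x ∂μ = 1) (hpref1 : ∫ x, pref x ∂μ = 1)
    (β : ℝ) (hβ : 0 < β)
    (hZint : Integrable (fun x => pref x * (pc x / pu x) ^ (1 / β)) μ)
    (lam : ℝ) (hlam : lam = (∫ x, pref x * (pc x / pu x) ^ (1 / β) ∂μ) ^ β)
    (pstar : X → ℝ)
    (hpstar : ∀ x, pstar x = pref x * (pc x / pu x) ^ (1 / β) * lam ^ (-(1 / β)))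
    (q : X → ℝ) (hqm : Measurable q) (hqpos : ∀ x, 0 < q x)
    (hqi : Integrable q μ) (hq1 : ∫ x, q x ∂μ = 1) :
    ((∀ x, 0 ≤ pstar x) ∧ Integrable pstar μ ∧ ∫ x, pstar x ∂μ = 1) ∧
      ((∫⁻ x, ENNReal.ofReal (pc x *
            (-(Real.log (_root_.sigmoid (β * Real.log (pstar x / pref x)))))) ∂μ
          + ENNReal.ofReal lam *
            ∫⁻ x, ENNReal.ofReal (pu x *
              (-(Real.log (_root_.sigmoid (-(β * Real.log (pstar x / pref x))))))) ∂μ)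
        ≤ (∫⁻ x, ENNReal.ofReal (pc x *
            (-(Real.log (_root_.sigmoid (β * Real.log (q x / pref x)))))) ∂μ
          + ENNReal.ofReal lam *
            ∫⁻ x, ENNReal.ofReal (pu x *
              (-(Real.log (_root_.sigmoid (-(β * Real.log (q x / pref x))))))) ∂μ)) := by
  have hβne : β ≠ 0 := ne_of_gt hβ
  set Z : ℝ := ∫ x, pref x * (pc x / pu x) ^ (1 / β) ∂μ with hZ
  have hfpos : ∀ x, 0 < pref x * (pc x / pu x) ^ (1 / β) := fun x =>
    mul_pos (hprefpos x) (Real.rpow_pos_of_pos (div_pos (hpcpos x) (hpupos x)) _)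
  have hZnn : 0 ≤ Z := integral_nonneg fun x => (hfpos x).le
  have hZpos : 0 < Z := by
    rcases hZnn.lt_or_eq with h | h
    · exact h
    · exfalso
      have h0 : (fun x => pref x * (pc x / pu x) ^ (1 / β)) =ᵐ[μ] 0 :=
        (integral_eq_zero_iff_of_nonneg (fun x => (hfpos x).le) hZint).mp h.symm
      have huniv : μ Set.univ = 0 := by
        have h0' := h0
        rw [Filter.EventuallyEq, ae_iff] at h0'
        have : {x | ¬ pref x * (pc x / pu x) ^ (1 / β) = (0 : X → ℝ) x} = Set.univ :=
          Set.eq_univ_of_forall fun x => by simpa using (hfpos x).ne'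
        rwa [this] at h0'
      have hμ0 : μ = 0 := Measure.measure_univ_eq_zero.mp huniv
      rw [hμ0] at hpc1
      simp at hpc1
  have hlampos : 0 < lam := by rw [hlam]; exact Real.rpow_pos_of_pos hZpos β
  have hLpos : 0 < lam ^ (-(1 / β)) := Real.rpow_pos_of_pos hlampos _
  -- part 1
  have hpstar_eq : pstar = fun x => (pref x * (pc x / pu x) ^ (1 / β)) * lam ^ (-(1 / β)) :=
    funext hpstar
  have hps_pos : ∀ x, 0 < pstar x := fun x => by
    rw [hpstar x]; exact mul_pos (hfpos x) hLpos
  have hps_nn : ∀ x, 0 ≤ pstar x := fun x => (hps_pos x).le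
  have hps_int : Integrable pstar μ := by
    rw [hpstar_eq]; exact hZint.mul_const _
  have hps_one : ∫ x, pstar x ∂μ = 1 := by
    rw [hpstar_eq, integral_mul_const]
    have hlamval : lam ^ (-(1 / β)) = Z⁻¹ := by
      rw [hlam, ← Real.rpow_mul hZnn]
      have : β * (-(1 / β)) = -1 := by field_simp
      rw [this, Real.rpow_neg_one]
    rw [hlamval]
    exact mul_inv_cancel₀ hZpos.ne'
  refine ⟨⟨hps_nn, hps_int, hps_one⟩, ?_⟩
  -- value of the sigmoid at pstar
  have hPval : ∀ x, _root_.sigmoid (β * Real.log (pstar x / pref x))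
      = pc x / (pc x + lam * pu x) := by
    intro x
    have hprne : pref x ≠ 0 := (hprefpos x).ne'
    have hs : pstar x / pref x = (pc x / pu x) ^ (1 / β) * lam ^ (-(1 / β)) := by
      rw [hpstar x]
      field_simp
    have hApos : 0 < (pc x / pu x) ^ (1 / β) :=
      Real.rpow_pos_of_pos (div_pos (hpcpos x) (hpupos x)) _
    have hspos : 0 < pstar x / pref x := by rw [hs]; exact mul_pos hApos hLpos
    rw [_root_.sigmoid_mul_log _ _ hspos, hs,
      Real.mul_rpow hApos.le hLpos.le,
      ← Real.rpow_mul (div_pos (hpcpos x) (hpupos x)).le,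
      ← Real.rpow_mul hlampos.le]
    have e1 : 1 / β * (-β) = -1 := by field_simp
    have e2 : -(1 / β) * (-β) = 1 := by field_simp
    rw [e1, e2, Real.rpow_neg_one, Real.rpow_one]
    rw [inv_div]
    have h1 : pc x ≠ 0 := (hpcpos x).ne'
    have h2 : 0 < pc x + lam * pu x := add_pos (hpcpos x) (mul_pos hlampos (hpupos x))
    have h3 : (0:ℝ) < 1 + pu x / pc x * lam :=
      by nlinarith [mul_pos (div_pos (hpupos x) (hpcpos x)) hlampos]
    rw [div_eq_div_iff h3.ne' h2.ne']
    field_simp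
  -- pointwise inequality
  have hnnA : ∀ w, 0 ≤ -Real.log (_root_.sigmoid w) := fun w =>
    neg_nonneg.mpr (Real.log_nonpos (_root_.sigmoid_pos w).le (_root_.sigmoid_lt_one w).le)
  have hkey : ∀ x,
      pc x * (-(Real.log (_root_.sigmoid (β * Real.log (pstar x / pref x)))))
        + lam * (pu x * (-(Real.log (_root_.sigmoid (-(β * Real.log (pstar x / pref x)))))))
      ≤ pc x * (-(Real.log (_root_.sigmoid (β * Real.log (q x / pref x)))))
        + lam * (pu x * (-(Real.log (_root_.sigmoid (-(β * Real.log (q x / pref x))))))) := by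
    intro x
    rw [_root_.sigmoid_neg, _root_.sigmoid_neg]
    have hg := gibbs (c := pc x) (u := lam * pu x)
      (P := _root_.sigmoid (β * Real.log (pstar x / pref x)))
      (Q := _root_.sigmoid (β * Real.log (q x / pref x)))
      (hpcpos x) (mul_pos hlampos (hpupos x))
      (hPval x) (_root_.sigmoid_pos _) (_root_.sigmoid_lt_one _)
    nlinarith [hg]
  -- measurability of the q-side integrand
  have hsigc : Continuous _root_.sigmoid := by
    unfold _root_.sigmoid
    exact continuous_const.div (by continuity) (fun w => by positivity)
  have hmq : Measurable fun x =>
      ENNReal.ofReal (pc x * (-(Real.log (_root_.sigmoid (β * Real.log (q x / pref x)))))) := by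
    apply Measurable.ennreal_ofReal
    exact hpcm.mul
      ((hsigc.measurable.comp (measurable_const.mul ((hqm.div hprefm).log))).log.neg)
  -- nonnegativity facts for combining ofReal
  have hnn1 : ∀ g : X → ℝ, ∀ x, 0 ≤ pc x * (-(Real.log (_root_.sigmoid (β * Real.log (g x / pref x))))) :=
    fun g x => mul_nonneg (hpcpos x).le (hnnA _)
  have hnn2 : ∀ g : X → ℝ, ∀ x,
      0 ≤ lam * (pu x * (-(Real.log (_root_.sigmoid (-(β * Real.log (g x / pref x))))))) :=
    fun g x => mul_nonneg hlampos.le (mul_nonneg (hpupos x).le (hnnA _))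
  have hlamne : ENNReal.ofReal lam ≠ ⊤ := ENNReal.ofReal_ne_top
  calc
    (∫⁻ x, ENNReal.ofReal (pc x *
          (-(Real.log (_root_.sigmoid (β * Real.log (pstar x / pref x)))))) ∂μ
        + ENNReal.ofReal lam *
          ∫⁻ x, ENNReal.ofReal (pu x *
            (-(Real.log (_root_.sigmoid (-(β * Real.log (pstar x / pref x))))))) ∂μ)
      = (∫⁻ x, ENNReal.ofReal (pc x *
          (-(Real.log (_root_.sigmoid (β * Real.log (pstar x / pref x)))))) ∂μ
        + ∫⁻ x, ENNReal.ofReal lam * ENNReal.ofReal (pu x *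
            (-(Real.log (_root_.sigmoid (-(β * Real.log (pstar x / pref x))))))) ∂μ) := by
        rw [lintegral_const_mul' _ _ hlamne]
    _ ≤ ∫⁻ x, (ENNReal.ofReal (pc x *
          (-(Real.log (_root_.sigmoid (β * Real.log (pstar x / pref x))))))
        + ENNReal.ofReal lam * ENNReal.ofReal (pu x *
            (-(Real.log (_root_.sigmoid (-(β * Real.log (pstar x / pref x)))))))) ∂μ :=
        le_lintegral_add _ _
    _ ≤ ∫⁻ x, (ENNReal.ofReal (pc x *
          (-(Real.log (_root_.sigmoid (β * Real.log (q x / pref x))))))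
        + ENNReal.ofReal lam * ENNReal.ofReal (pu x *
            (-(Real.log (_root_.sigmoid (-(β * Real.log (q x / pref x)))))))) ∂μ := by
        apply lintegral_mono
        intro x
        dsimp only
        rw [← ENNReal.ofReal_mul hlampos.le, ← ENNReal.ofReal_mul hlampos.le,
          ← ENNReal.ofReal_add (hnn1 pstar x) (hnn2 pstar x),
          ← ENNReal.ofReal_add (hnn1 q x) (hnn2 q x)]
        exact ENNReal.ofReal_le_ofReal (hkey x)
    _ = (∫⁻ x, ENNReal.ofReal (pc x *
          (-(Real.log (_root_.sigmoid (β * Real.log (q x / pref x)))))) ∂μ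
        + ∫⁻ x, ENNReal.ofReal lam * ENNReal.ofReal (pu x *
            (-(Real.log (_root_.sigmoid (-(β * Real.log (q x / pref x))))))) ∂μ) :=
        lintegral_add_left hmq _
    _ = _ := by rw [lintegral_const_mul' _ _ hlamne]
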